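/- Identification of the retraining effect (Corollary 5 T2, equation (7)): Let μ_t be the law of (X, Z, Y) under deployment of the current parameters θ_t and ν_{t+1} the law under deployment of the retrained parameters θ_{t+1}, both with integrable outcome coordinate, admitting a common disintegration kernel κ of the outcome given (X,Z), and with (ν_{t+1})_{XZ} ≪ (μ_t)_{XZ}. Then for every measurable g : 𝒳 × 𝒵 → ℝ that is a version of the conditional expectation of Y given the (X,Z)-coordinates under μ_t, the retraining effect satisfies ρ(θ_{t+1}, θ_t) = ∫ g d(ν_{t+1})_{XZ} − ∫ Y dμ_t; hence ρ is computable from the current-deployment law μ_t together with the (X,Z)-marginal of the retrained-deployment law alone, without observing outcomes under the retrained model. -/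

import Mathlib

open MeasureTheory ProbabilityTheory

private lemma aux_setIntegral_pivot {𝒳 𝒵 : Type*} [MeasurableSpace 𝒳] [MeasurableSpace 𝒵]
    (P : Measure (𝒳 × 𝒵 × ℝ)) [IsProbabilityMeasure P]
    (κ : Kernel (𝒳 × 𝒵) ℝ) [IsMarkovKernel κ]
    (hP : P = (P.map (fun ω => (ω.1, ω.2.1)) ⊗ₘ κ).map MeasurableEquiv.prodAssoc)
    (hY : Integrable (fun ω : 𝒳 × 𝒵 × ℝ => ω.2.2) P)
    {t : Set (𝒳 × 𝒵)} (ht : MeasurableSet t) :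
    ∫ ω in (fun ω : 𝒳 × 𝒵 × ℝ => (ω.1, ω.2.1)) ⁻¹' t, ω.2.2 ∂P
      = ∫ q in t, ∫ y, y ∂κ q ∂(P.map (fun ω : 𝒳 × 𝒵 × ℝ => (ω.1, ω.2.1))) := by
  have hπ : Measurable (fun ω : 𝒳 × 𝒵 × ℝ => (ω.1, ω.2.1)) :=
    measurable_fst.prodMk (measurable_fst.comp measurable_snd)
  have hm : IsProbabilityMeasure (P.map (fun ω : 𝒳 × 𝒵 × ℝ => (ω.1, ω.2.1))) :=
    Measure.isProbabilityMeasure_map hπ.aemeasurable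
  have hQ : Integrable (fun p : (𝒳 × 𝒵) × ℝ => p.2)
      (P.map (fun ω : 𝒳 × 𝒵 × ℝ => (ω.1, ω.2.1)) ⊗ₘ κ) := by
    have h1 := hY
    rw [hP] at h1
    exact (integrable_map_equiv (MeasurableEquiv.prodAssoc)
      (fun ω : 𝒳 × 𝒵 × ℝ => ω.2.2)).mp h1
  conv_lhs => rw [hP]
  rw [setIntegral_map_equiv]
  have hset : (MeasurableEquiv.prodAssoc : (𝒳 × 𝒵) × ℝ ≃ᵐ 𝒳 × 𝒵 × ℝ) ⁻¹'
      ((fun ω : 𝒳 × 𝒵 × ℝ => (ω.1, ω.2.1)) ⁻¹' t) = t ×ˢ Set.univ := by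
    ext p
    simp [MeasurableEquiv.prodAssoc, Set.mem_prod]
  rw [hset]
  have hshow : ∫ x in t ×ˢ Set.univ, (MeasurableEquiv.prodAssoc x).2.2
        ∂(P.map (fun ω : 𝒳 × 𝒵 × ℝ => (ω.1, ω.2.1)) ⊗ₘ κ)
      = ∫ x in t ×ˢ Set.univ, x.2
        ∂(P.map (fun ω : 𝒳 × 𝒵 × ℝ => (ω.1, ω.2.1)) ⊗ₘ κ) := rfl
  rw [hshow, Measure.setIntegral_compProd ht MeasurableSet.univ hQ.integrableOn]
  simp

theorem retraining_effect_identification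
    {𝒳 𝒵 : Type*} [MeasurableSpace 𝒳] [StandardBorelSpace 𝒳]
    [MeasurableSpace 𝒵] [StandardBorelSpace 𝒵]
    (μt νt1 : Measure (𝒳 × 𝒵 × ℝ)) [IsProbabilityMeasure μt] [IsProbabilityMeasure νt1]
    (κ : Kernel (𝒳 × 𝒵) ℝ) [IsMarkovKernel κ]
    (hμt : μt = (μt.map (fun ω => (ω.1, ω.2.1)) ⊗ₘ κ).map MeasurableEquiv.prodAssoc)
    (hνt1 : νt1 = (νt1.map (fun ω => (ω.1, ω.2.1)) ⊗ₘ κ).map MeasurableEquiv.prodAssoc)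
    (hYμt : Integrable (fun ω : 𝒳 × 𝒵 × ℝ => ω.2.2) μt)
    (hYνt1 : Integrable (fun ω : 𝒳 × 𝒵 × ℝ => ω.2.2) νt1)
    (hac : νt1.map (fun ω : 𝒳 × 𝒵 × ℝ => (ω.1, ω.2.1)) ≪
      μt.map (fun ω : 𝒳 × 𝒵 × ℝ => (ω.1, ω.2.1)))
    (g : 𝒳 × 𝒵 → ℝ) (hg : Measurable g)
    (hgμt : (fun ω : 𝒳 × 𝒵 × ℝ => g (ω.1, ω.2.1)) =ᵐ[μt]
      μt[(fun ω : 𝒳 × 𝒵 × ℝ => ω.2.2) |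
        MeasurableSpace.comap (fun ω : 𝒳 × 𝒵 × ℝ => (ω.1, ω.2.1)) inferInstance]) :
    ∫ ω, ω.2.2 ∂νt1 - ∫ ω, ω.2.2 ∂μt =
      ∫ q, g q ∂(νt1.map (fun ω : 𝒳 × 𝒵 × ℝ => (ω.1, ω.2.1))) - ∫ ω, ω.2.2 ∂μt := by
  have hπ : Measurable (fun ω : 𝒳 × 𝒵 × ℝ => (ω.1, ω.2.1)) :=
    measurable_fst.prodMk (measurable_fst.comp measurable_snd)
  set f : 𝒳 × 𝒵 → ℝ := fun q => ∫ y, y ∂(κ q) with hfdef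
  have hfm : StronglyMeasurable f :=
    MeasureTheory.StronglyMeasurable.integral_kernel_prod_right' (κ := κ)
      measurable_snd.stronglyMeasurable
  have hmμ : IsProbabilityMeasure (μt.map (fun ω : 𝒳 × 𝒵 × ℝ => (ω.1, ω.2.1))) :=
    Measure.isProbabilityMeasure_map hπ.aemeasurable
  have hmν : IsProbabilityMeasure (νt1.map (fun ω : 𝒳 × 𝒵 × ℝ => (ω.1, ω.2.1))) :=
    Measure.isProbabilityMeasure_map hπ.aemeasurable
  have hmle : MeasurableSpace.comap (fun ω : 𝒳 × 𝒵 × ℝ => (ω.1, ω.2.1)) inferInstance ≤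
      (inferInstance : MeasurableSpace (𝒳 × 𝒵 × ℝ)) := hπ.comap_le
  -- integrability of the second coordinate under the compProd representation
  have hQμ : Integrable (fun p : (𝒳 × 𝒵) × ℝ => p.2)
      (μt.map (fun ω : 𝒳 × 𝒵 × ℝ => (ω.1, ω.2.1)) ⊗ₘ κ) := by
    have h1 := hYμt
    rw [hμt] at h1
    exact (integrable_map_equiv (MeasurableEquiv.prodAssoc)
      (fun ω : 𝒳 × 𝒵 × ℝ => ω.2.2)).mp h1
  -- integrability of f under the (X,Z)-marginal of μt
  have hfint : Integrable f (μt.map (fun ω : 𝒳 × 𝒵 × ℝ => (ω.1, ω.2.1))) := by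
    have h2 := (Measure.integrable_compProd_iff hQμ.aestronglyMeasurable).mp hQμ
    refine h2.2.mono' hfm.aestronglyMeasurable ?_
    filter_upwards with q
    exact norm_integral_le_integral_norm _
  have hfπint : Integrable (fun ω : 𝒳 × 𝒵 × ℝ => f (ω.1, ω.2.1)) μt :=
    (integrable_map_measure hfm.aestronglyMeasurable hπ.aemeasurable).mp hfint
  -- f ∘ π is a version of E[Y | X, Z] under μt
  haveI : SigmaFinite (μt.trim hmle) := by
    have : IsFiniteMeasure (μt.trim hmle) := isFiniteMeasure_trim hmle
    infer_instance
  have hfcond : (fun ω : 𝒳 × 𝒵 × ℝ => f (ω.1, ω.2.1)) =ᵐ[μt]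
      μt[(fun ω : 𝒳 × 𝒵 × ℝ => ω.2.2) |
        MeasurableSpace.comap (fun ω : 𝒳 × 𝒵 × ℝ => (ω.1, ω.2.1)) inferInstance] := by
    refine ae_eq_condExp_of_forall_setIntegral_eq hmle hYμt
      (fun s _ _ => hfπint.integrableOn) ?_ ?_
    · rintro s ⟨t, ht, rfl⟩ -
      rw [← setIntegral_map ht hfm.aestronglyMeasurable hπ.aemeasurable,
        ← aux_setIntegral_pivot μt κ hμt hYμt ht]
    · exact (hfm.comp_measurable (Measurable.of_comap_le le_rfl)).aestronglyMeasurable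
  -- hence g = f a.e. on the (X,Z)-marginal of μt, hence a.e. for νt1's marginal
  have hgfμ : g =ᵐ[μt.map (fun ω : 𝒳 × 𝒵 × ℝ => (ω.1, ω.2.1))] f := by
    have hgfπ : (fun ω : 𝒳 × 𝒵 × ℝ => g (ω.1, ω.2.1)) =ᵐ[μt]
        (fun ω : 𝒳 × 𝒵 × ℝ => f (ω.1, ω.2.1)) := hgμt.trans hfcond.symm
    exact (MeasureTheory.ae_map_iff hπ.aemeasurable
      (measurableSet_eq_fun hg hfm.measurable)).mpr hgfπ
  have hgfν : g =ᵐ[νt1.map (fun ω : 𝒳 × 𝒵 × ℝ => (ω.1, ω.2.1))] f := hgfμ.filter_mono hac.ae_le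
  -- compute ∫ Y dνt1 via the disintegration
  have h1 : ∫ ω, ω.2.2 ∂νt1 = ∫ q, f q ∂(νt1.map (fun ω : 𝒳 × 𝒵 × ℝ => (ω.1, ω.2.1))) := by
    have h := aux_setIntegral_pivot νt1 κ hνt1 hYνt1 MeasurableSet.univ
    simpa using h
  rw [h1, integral_congr_ae hgfν]
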